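/- For every natural number n, n = r₁₁(n) + v₂(n!) + r₀₁(n), where r₁₁(n) is the number of occurrences of the block 11 in the binary expansion of n, r₀₁(n) is the number of occurrences of the block 01 in the binary expansion of n (including the block containing the most significant digit, i.e., counting an occurrence at the leading 1), and v₂(n!) is the 2-adic valuation of n!. -/

import Mathlib

/-- Number of occurrences of the block `11` in the binary expansion of `n`. -/
def r11 (n : ℕ) : ℕ :=
  ((Finset.range n).filter (fun i => n.testBit i = true ∧ n.testBit (i + 1) = true)).card

/-- Number of occurrences of the block `01` in the binary expansion of `n`,
counting the occurrence at the most significant digit. -/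
def r01 (n : ℕ) : ℕ :=
  ((Finset.range n).filter (fun i => n.testBit i = true ∧ n.testBit (i + 1) = false)).card

lemma popcount_aux (k : ℕ) : ∀ n : ℕ, n < 2 ^ k →
    ((Finset.range k).filter (fun i => n.testBit i = true)).card = (Nat.digits 2 n).sum := by
  induction k with
  | zero =>
    intro n hn
    interval_cases n
    simp
  | succ k ih =>
    intro n hn
    rcases Nat.eq_zero_or_pos n with rfl | hpos
    · simp
    rw [Nat.digits_def' (by norm_num) hpos, List.sum_cons,
      ← ih (n / 2) (by rw [pow_succ] at hn; omega)]
    rw [Finset.card_filter, Finset.card_filter, Finset.sum_range_succ']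
    have h0 : (if n.testBit 0 = true then 1 else 0) = n % 2 := by
      rcases Nat.mod_two_eq_zero_or_one n with h | h <;> simp [Nat.testBit_zero, h]
    rw [h0, add_comm]
    congr 1
    refine Finset.sum_congr rfl fun i _ => ?_
    rw [Nat.testBit_add_one]

lemma popcount_eq (n : ℕ) :
    ((Finset.range n).filter (fun i => n.testBit i = true)).card = (Nat.digits 2 n).sum :=
  popcount_aux n n (Nat.lt_two_pow_self (n := n))

theorem stmt_0 (n : ℕ) :
    n = r11 n + padicValNat 2 (Nat.factorial n) + r01 n := by
  have hsplit : r11 n + r01 n = (Nat.digits 2 n).sum := by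
    rw [← popcount_eq n, r11, r01]
    rw [Finset.card_filter, Finset.card_filter, Finset.card_filter, ← Finset.sum_add_distrib]
    refine Finset.sum_congr rfl fun i _ => ?_
    cases h : n.testBit i <;> cases h' : n.testBit (i + 1) <;> simp [h, h']
  have hleg : padicValNat 2 (Nat.factorial n) = n - (Nat.digits 2 n).sum := by
    have := @sub_one_mul_padicValNat_factorial 2 ⟨Nat.prime_two⟩ n
    simpa using this
  have hle : (Nat.digits 2 n).sum ≤ n := Nat.digit_sum_le 2 n
  omega
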